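/- Let m, n, k be positive integers with m even, n ≥ 2, k ≤ m/2 and k dividing m/2, and let ε, δ, β ≥ 0. Let A be a randomized algorithm mapping each histogram h : {1,…,m} → ℕ to a probability distribution over pairs (c, o), where c ∈ ℕ is the access cost and o is a size-k subset of {1,…,m}, and assume: (i) the induced output algorithm h ↦ (law of o under A(h)) is (ε,δ)-differentially private; (ii) for every histogram h, with probability at least 1−β the output o is (n−2,k)-accurate for h; (iii) for every histogram h, almost surely every pair (c,o) produced by A(h) satisfies: for every i ∈ o, the number of indices j with h[j] > h[i] is strictly less than c (this captures that an algorithm with only sorted access never returns an item it has not seen within its c sorted accesses, under any tie-breaking). Let S = {1,…,m/2}, let S_L be a uniformly random subset of S of cardinality (m/2)/k, let S_H = S ∖ S_L, and define the histogram h_{S_H,S_L} by h_{S_H,S_L}[i] = n for i ∈ S_H, n−1 for i ∈ S_L, and 0 for i ∉ S. Then E_{S_L, A}[ c ] ≥ e^{−ε} · (1 − β − δ − e^{−1}) · (m/2 − m/(2k)), where the expectation is first over the uniform choice of S_L and then over the randomness of A on input h_{S_H,S_L}. -/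

import Mathlib

open scoped ENNReal

lemma card_filter_val_lt (m t : ℕ) (ht : t ≤ m) :
    (Finset.univ.filter fun i : Fin m => (i : ℕ) < t).card = t := by
  classical
  have h : ∀ a ∈ Finset.range t, a < m := fun a ha =>
    lt_of_lt_of_le (Finset.mem_range.1 ha) ht
  have : (Finset.univ.filter fun i : Fin m => (i : ℕ) < t)
      = (Finset.range t).attachFin h := by
    ext i
    simp [Finset.mem_attachFin]
  rw [this, Finset.card_attachFin, Finset.card_range]

lemma aux_choose (M k : ℕ) (hk : k ≤ M) :
    ∀ r, (M - k).choose r * M ^ r ≤ M.choose r * (M - k) ^ r := by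
  intro r
  induction r with
  | zero => simp
  | succ r ih =>
    rcases lt_or_ge (M - k) (r + 1) with h | h
    · simp [Nat.choose_eq_zero_of_lt h]
    · have hrm : r + 1 + k ≤ M := by omega
      have key : M * (M - k - r) ≤ (M - r) * (M - k) := by
        have h1 : k ≤ M := by omega
        have h2 : r ≤ M := by omega
        have h3 : r ≤ M - k := by omega
        zify [h1, h2, h3]
        nlinarith [Int.natCast_nonneg k, Int.natCast_nonneg r]
      apply Nat.le_of_mul_le_mul_right _ (Nat.succ_pos r)
      calc (M - k).choose (r + 1) * M ^ (r + 1) * (r + 1)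
          = ((M - k).choose (r + 1) * (r + 1)) * M ^ (r + 1) := by ring
        _ = ((M - k).choose r * (M - k - r)) * M ^ (r + 1) := by
            rw [Nat.choose_succ_right_eq]
        _ = ((M - k).choose r * M ^ r) * (M * (M - k - r)) := by ring
        _ ≤ (M.choose r * (M - k) ^ r) * ((M - r) * (M - k)) :=
            Nat.mul_le_mul ih key
        _ = (M.choose r * (M - r)) * (M - k) ^ (r + 1) := by ring
        _ = (M.choose (r + 1) * (r + 1)) * (M - k) ^ (r + 1) := by
            rw [Nat.choose_succ_right_eq]
        _ = M.choose (r + 1) * (M - k) ^ (r + 1) * (r + 1) := by ring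

lemma choose_le_exp (M k r : ℕ) (hk0 : 0 < k) (hkM : k ≤ M) (hkr : k * r = M) :
    ((M - k).choose r : ℝ) ≤ Real.exp (-1) * M.choose r := by
  have hM0 : 0 < M := by
    rcases Nat.eq_zero_or_pos r with hr | hr
    · subst hr; omega
    · calc 0 < k * r := Nat.mul_pos hk0 hr
        _ = M := hkr
  have hMR : (0 : ℝ) < (M : ℝ) := by exact_mod_cast hM0
  have hsub : ((M - k : ℕ) : ℝ) = (M : ℝ) - k := by
    push_cast [Nat.cast_sub hkM]; ring
  have hbase : ((M - k : ℕ) : ℝ) ≤ (M : ℝ) * Real.exp (-(k / M : ℝ)) := by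
    rw [hsub]
    have h1 : (-(k / M : ℝ)) + 1 ≤ Real.exp (-(k / M : ℝ)) := Real.add_one_le_exp _
    have : (M : ℝ) * (-(k / M : ℝ) + 1) = (M : ℝ) - k := by
      field_simp; ring
    nlinarith
  have hpow : ((M - k : ℕ) : ℝ) ^ r ≤ ((M : ℝ) * Real.exp (-(k / M : ℝ))) ^ r :=
    pow_le_pow_left₀ (by positivity) hbase r
  have hexp : (Real.exp (-(k / M : ℝ))) ^ r = Real.exp (-1) := by
    rw [← Real.exp_nat_mul]
    congr 1
    have : (k : ℝ) * r = M := by exact_mod_cast hkr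
    field_simp
    linarith
  have hmain : ((M - k).choose r : ℝ) * (M : ℝ) ^ r ≤ (M.choose r : ℝ) * ((M - k : ℕ) : ℝ) ^ r := by
    exact_mod_cast aux_choose M k hkM r
  have hMpow : (0 : ℝ) < (M : ℝ) ^ r := by positivity
  rw [← mul_le_mul_iff_of_pos_right hMpow]
  calc ((M - k).choose r : ℝ) * (M : ℝ) ^ r
      ≤ (M.choose r : ℝ) * ((M - k : ℕ) : ℝ) ^ r := hmain
    _ ≤ (M.choose r : ℝ) * ((M : ℝ) * Real.exp (-(k / M : ℝ))) ^ r := by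
        exact mul_le_mul_of_nonneg_left hpow (by positivity)
    _ = Real.exp (-1) * (M.choose r : ℝ) * (M : ℝ) ^ r := by
        rw [mul_pow, hexp]; ring

/-- The `k`-th largest entry of a histogram `h : Fin m → ℕ` (for `1 ≤ k ≤ m`):
the largest value `v` such that at least `k` entries of `h` are `≥ v`. -/
noncomputable def kthLargest (m : ℕ) (h : Fin m → ℕ) (k : ℕ) : ℕ :=
  sSup {v : ℕ | k ≤ (Finset.univ.filter fun i => v ≤ h i).card}

/-- The planted histogram. -/
def histo (m n : ℕ) (S sL : Finset (Fin m)) : Fin m → ℕ :=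
  fun i => if i ∈ sL then n - 1 else if i ∈ S then n else 0

/-- Let `m` be even, `n ≥ 2`, `k ≤ m/2` with `k ∣ m/2`, and let
`A` map histograms to distributions over pairs `(c, o)` of an access cost and a
size-`k` output set, such that (i) the induced output algorithm is `(ε,δ)`-DP,
(ii) the output is `(n−2,k)`-accurate with probability `≥ 1−β` on every input,
and (iii) almost surely every returned item `i ∈ o` has fewer than `c` indices
with strictly larger histogram value (sorted access sees only the top `c`
entries).  With `S = {1,…,m/2}`, `S_L` a uniformly random subset of `S` of size
`(m/2)/k`, and `h_{S_H,S_L}` equal to `n` on `S ∖ S_L`, `n−1` on `S_L`, `0` off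
`S`, the expected access cost satisfies
`E_{S_L,A}[c] ≥ e^{−ε}(1−β−δ−e^{−1})·(m/2 − m/(2k))`. -/
theorem stmt_14 (m n k : ℕ) (hm : 0 < m) (heven : 2 ∣ m) (hn : 2 ≤ n)
    (hk : 0 < k) (hkm : k ≤ m / 2) (hdvd : k ∣ m / 2)
    (ε δ β : ℝ) (hε : 0 ≤ ε) (hδ : 0 ≤ δ) (hβ : 0 ≤ β)
    (A : (Fin m → ℕ) → PMF (ℕ × {o : Finset (Fin m) // o.card = k}))
    (hDP : ∀ h h' : Fin m → ℕ, (∀ i, |(h i : ℤ) - (h' i : ℤ)| ≤ 1) →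
      ∀ Z : Set {o : Finset (Fin m) // o.card = k},
        ((A h).map Prod.snd).toOuterMeasure Z ≤
          ENNReal.ofReal (Real.exp ε) * ((A h').map Prod.snd).toOuterMeasure Z +
            ENNReal.ofReal δ)
    (hacc : ∀ h : Fin m → ℕ,
      ENNReal.ofReal (1 - β) ≤
        (A h).toOuterMeasure
          {p | ∀ i ∈ p.2.val,
            (kthLargest m h k : ℤ) - ((n : ℤ) - 2) ≤ (h i : ℤ)})
    (hseen : ∀ h : Fin m → ℕ, ∀ p ∈ (A h).support, ∀ i ∈ p.2.val,
      (Finset.univ.filter fun j : Fin m => h i < h j).card < p.1) :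
    ENNReal.ofReal
        (Real.exp (-ε) * (1 - β - δ - Real.exp (-1)) *
          ((m : ℝ) / 2 - (m : ℝ) / (2 * k))) ≤
      (∑ sL ∈ (Finset.univ.filter fun i : Fin m => (i : ℕ) < m / 2).powersetCard
            ((Finset.univ.filter fun i : Fin m => (i : ℕ) < m / 2).card / k),
          ∑' p : ℕ × {o : Finset (Fin m) // o.card = k},
            A (fun i => if i ∈ sL then n - 1
                else if i ∈ (Finset.univ.filter fun i : Fin m => (i : ℕ) < m / 2)
                  then n else 0) p * (p.1 : ℝ≥0∞)) /
        (((Finset.univ.filter fun i : Fin m => (i : ℕ) < m / 2).powersetCard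
            ((Finset.univ.filter fun i : Fin m => (i : ℕ) < m / 2).card / k)).card
          : ℝ≥0∞) := by
  classical
  set S : Finset (Fin m) := Finset.univ.filter fun i : Fin m => (i : ℕ) < m / 2 with hSdef
  set r : ℕ := S.card / k with hrdef
  set F : Finset (Finset (Fin m)) := S.powersetCard r with hFdef
  have hScard : S.card = m / 2 := card_filter_val_lt m (m / 2) (Nat.div_le_self m 2)
  have hkM : k ≤ S.card := hScard ▸ hkm
  have hdvd' : k ∣ S.card := hScard ▸ hdvd
  have hkr : k * r = S.card := Nat.mul_div_cancel' hdvd'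
  have hrM : r ≤ S.card := Nat.div_le_self _ _
  have hFcard : F.card = S.card.choose r := by rw [hFdef, Finset.card_powersetCard]
  have hFpos : 0 < F.card := by rw [hFcard]; exact Nat.choose_pos hrM
  have hM2 : 2 * S.card = m := by rw [hScard]; exact Nat.mul_div_cancel' heven
  have hMcast : (S.card : ℝ) = (m : ℝ) / 2 := by
    have : (2 : ℝ) * (S.card : ℝ) = (m : ℝ) := by exact_mod_cast hM2
    linarith
  have hrcast : (r : ℝ) = (m : ℝ) / (2 * k) := by
    have h1 : (k : ℝ) * (r : ℝ) = (S.card : ℝ) := by exact_mod_cast hkr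
    have hk0 : (0 : ℝ) < (k : ℝ) := by exact_mod_cast hk
    rw [eq_div_iff (by positivity)]
    linear_combination 2 * h1 + 2 * hMcast
  set N : ℕ := S.card - r with hNdef
  have hNcast : (N : ℝ) = (m : ℝ) / 2 - (m : ℝ) / (2 * k) := by
    rw [hNdef, Nat.cast_sub hrM, hMcast, hrcast]
  -- basic facts about the planted histogram
  have Hout : ∀ sL, sL ⊆ S → ∀ i, i ∉ S → histo m n S sL i = 0 := by
    intro sL hsub i hi
    unfold histo
    rw [if_neg (fun h => hi (hsub h)), if_neg hi]
  have hkth : ∀ sL, sL ⊆ S → n - 1 ≤ kthLargest m (histo m n S sL) k := by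
    intro sL hsub
    unfold kthLargest
    apply le_csSup
    · refine ⟨n, fun v hv => ?_⟩
      by_contra hvn
      push_neg at hvn
      have he : (Finset.univ.filter fun i => v ≤ histo m n S sL i) = ∅ := by
        ext i
        simp only [Finset.mem_filter, Finset.mem_univ, true_and, Finset.notMem_empty,
          iff_false]
        unfold histo
        split_ifs <;> omega
      have hv' : k ≤ (Finset.univ.filter fun i => v ≤ histo m n S sL i).card := hv
      rw [he] at hv'
      simp at hv'
      omega
    · show k ≤ (Finset.univ.filter fun i => n - 1 ≤ histo m n S sL i).card
      have hsub2 : S ⊆ Finset.univ.filter fun i => n - 1 ≤ histo m n S sL i := by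
        intro i hi
        simp only [Finset.mem_filter, Finset.mem_univ, true_and]
        unfold histo
        split_ifs <;> omega
      exact le_trans hkM (Finset.card_le_card hsub2)
  have hoS : ∀ sL, sL ⊆ S → ∀ o : Finset (Fin m),
      (∀ i ∈ o, (kthLargest m (histo m n S sL) k : ℤ) - ((n : ℤ) - 2)
        ≤ (histo m n S sL i : ℤ)) → o ⊆ S := by
    intro sL hsub o hso i hi
    by_contra hiS
    have h0 : histo m n S sL i = 0 := Hout sL hsub i hiS
    have h1 := hso i hi
    rw [h0] at h1
    have h2 := hkth sL hsub
    push_cast at h1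
    omega
  set Z : Finset (Fin m) → Set {o : Finset (Fin m) // o.card = k} :=
    fun sL => {o | ∃ i ∈ o.val, i ∈ sL} with hZdef
  set P : Finset (Fin m) → ℝ≥0∞ :=
    fun sL => (A (histo m n S sL)).toOuterMeasure (Prod.snd ⁻¹' Z sL) with hPdef
  -- Step 1: per-sL expected cost bound
  have hstep1 : ∀ sL ∈ F, (N : ℝ≥0∞) * P sL ≤
      ∑' p : ℕ × {o : Finset (Fin m) // o.card = k},
        A (histo m n S sL) p * (p.1 : ℝ≥0∞) := by
    intro sL hsL
    obtain ⟨hsub, hcard⟩ := Finset.mem_powersetCard.1 hsL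
    simp only [hPdef]
    rw [PMF.toOuterMeasure_apply, ← ENNReal.tsum_mul_left]
    refine ENNReal.tsum_le_tsum fun p => ?_
    by_cases hp : p ∈ Prod.snd ⁻¹' Z sL
    · rw [Set.indicator_of_mem hp]
      by_cases hp0 : A (histo m n S sL) p = 0
      · simp [hp0]
      · obtain ⟨i, hio, hisL⟩ := hp
        have hseen' := hseen (histo m n S sL) p ((PMF.mem_support_iff _ _).2 hp0) i hio
        have hHi : histo m n S sL i = n - 1 := if_pos hisL
        have hfe : (Finset.univ.filter fun j => histo m n S sL i < histo m n S sL j)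
            = S \ sL := by
          ext j
          simp only [Finset.mem_filter, Finset.mem_univ, true_and, Finset.mem_sdiff, hHi]
          unfold histo
          split_ifs with h1 h2
          · exact iff_of_false (lt_irrefl _) (fun hc => hc.2 h1)
          · exact iff_of_true (by omega) ⟨h2, h1⟩
          · exact iff_of_false (by omega) (fun hc => h2 hc.1)
        have hcard2 : (S \ sL).card = N := by
          rw [Finset.card_sdiff_of_subset hsub, hcard]
        have hc : N ≤ p.1 := by rw [hfe, hcard2] at hseen'; omega
        rw [mul_comm]
        exact mul_le_mul_right (by exact_mod_cast hc) _
    · rw [Set.indicator_of_notMem hp]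
      simp
  -- reference set
  obtain ⟨sL₀, hsL₀⟩ := Finset.card_pos.1 hFpos
  obtain ⟨hsub₀, hcard₀⟩ := Finset.mem_powersetCard.1 hsL₀
  -- neighboring
  have hnbr : ∀ sL, sL ⊆ S → ∀ i,
      |(histo m n S sL₀ i : ℤ) - (histo m n S sL i : ℤ)| ≤ 1 := by
    intro sL hsub i
    rw [abs_le]
    by_cases hiS : i ∈ S
    · have b1 : n - 1 ≤ histo m n S sL₀ i ∧ histo m n S sL₀ i ≤ n := by
        unfold histo; split_ifs <;> omega
      have b2 : n - 1 ≤ histo m n S sL i ∧ histo m n S sL i ≤ n := by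
        unfold histo; split_ifs <;> omega
      omega
    · rw [Hout sL₀ hsub₀ i hiS, Hout sL hsub i hiS]
      simp
  -- DP transfer
  have hQP : ∀ sL ∈ F,
      (A (histo m n S sL₀)).toOuterMeasure (Prod.snd ⁻¹' Z sL) ≤
        ENNReal.ofReal (Real.exp ε) * P sL + ENNReal.ofReal δ := by
    intro sL hsL
    obtain ⟨hsub, -⟩ := Finset.mem_powersetCard.1 hsL
    have h := hDP (histo m n S sL₀) (histo m n S sL) (hnbr sL hsub) (Z sL)
    rwa [PMF.toOuterMeasure_map_apply, PMF.toOuterMeasure_map_apply] at h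
  -- counting
  set G : ℕ := S.card.choose r - (S.card - k).choose r with hGdef
  have hG : ∀ o : Finset (Fin m), o ⊆ S → o.card = k →
      G ≤ (F.filter fun sL => ∃ i ∈ o, i ∈ sL).card := by
    intro o hoSS hoc
    have hneg : F.filter (fun sL => ¬ ∃ i ∈ o, i ∈ sL) = (S \ o).powersetCard r := by
      ext sL
      simp only [Finset.mem_filter, hFdef, Finset.mem_powersetCard, Finset.subset_sdiff,
        Finset.disjoint_right]
      push_neg
      tauto
    have hnegcard : (F.filter fun sL => ¬ ∃ i ∈ o, i ∈ sL).card = (S.card - k).choose r := by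
      rw [hneg, Finset.card_powersetCard, Finset.card_sdiff_of_subset hoSS, hoc]
    have htot := Finset.card_filter_add_card_filter_not
      (s := F) (p := fun sL => ∃ i ∈ o, i ∈ sL)
    omega
  have hcount : (G : ℝ≥0∞) * ENNReal.ofReal (1 - β) ≤
      ∑ sL ∈ F, (A (histo m n S sL₀)).toOuterMeasure (Prod.snd ⁻¹' Z sL) := by
    set Acc : Set (ℕ × {o : Finset (Fin m) // o.card = k}) :=
      {p | ∀ i ∈ p.2.val,
        (kthLargest m (histo m n S sL₀) k : ℤ) - ((n : ℤ) - 2)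
          ≤ (histo m n S sL₀ i : ℤ)} with hAccDef
    have h1 : (G : ℝ≥0∞) * ENNReal.ofReal (1 - β) ≤
        (G : ℝ≥0∞) * (A (histo m n S sL₀)).toOuterMeasure Acc :=
      mul_le_mul_right (hacc (histo m n S sL₀)) _
    refine h1.trans ?_
    rw [PMF.toOuterMeasure_apply, ← ENNReal.tsum_mul_left]
    have h2 : ∀ p, (G : ℝ≥0∞) * Acc.indicator (A (histo m n S sL₀)) p ≤
        ∑ sL ∈ F, (Prod.snd ⁻¹' Z sL).indicator (A (histo m n S sL₀)) p := by
      intro p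
      by_cases hp : p ∈ Acc
      · rw [Set.indicator_of_mem hp]
        have hpS : p.2.val ⊆ S := hoS sL₀ hsub₀ p.2.val hp
        have hcard3 := hG p.2.val hpS p.2.2
        have h3 : ∑ sL ∈ F, (Prod.snd ⁻¹' Z sL).indicator (A (histo m n S sL₀)) p
            = ((F.filter fun sL => ∃ i ∈ p.2.val, i ∈ sL).card : ℝ≥0∞)
              * A (histo m n S sL₀) p := by
          simp only [Set.indicator_apply, hZdef, Set.mem_preimage, Set.mem_setOf_eq]
          rw [Finset.sum_ite, Finset.sum_const, Finset.sum_const_zero, add_zero,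
            nsmul_eq_mul]
        rw [h3]
        exact mul_le_mul_left (by exact_mod_cast hcard3) _
      · rw [Set.indicator_of_notMem hp]
        simp only [mul_zero]
        exact zero_le
    calc ∑' p, (G : ℝ≥0∞) * Acc.indicator (A (histo m n S sL₀)) p
        ≤ ∑' p, ∑ sL ∈ F, (Prod.snd ⁻¹' Z sL).indicator (A (histo m n S sL₀)) p :=
          ENNReal.tsum_le_tsum h2
      _ = ∑ sL ∈ F, ∑' p, (Prod.snd ⁻¹' Z sL).indicator (A (histo m n S sL₀)) p :=
          Summable.tsum_finsetSum fun _ _ => ENNReal.summable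
      _ = ∑ sL ∈ F, (A (histo m n S sL₀)).toOuterMeasure (Prod.snd ⁻¹' Z sL) := by
          refine Finset.sum_congr rfl fun sL _ => ?_
          rw [PMF.toOuterMeasure_apply]
  -- sum the DP inequality
  have hsumQ : ∑ sL ∈ F, (A (histo m n S sL₀)).toOuterMeasure (Prod.snd ⁻¹' Z sL) ≤
      ENNReal.ofReal (Real.exp ε) * (∑ sL ∈ F, P sL) + (F.card : ℝ≥0∞) * ENNReal.ofReal δ := by
    calc ∑ sL ∈ F, (A (histo m n S sL₀)).toOuterMeasure (Prod.snd ⁻¹' Z sL)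
        ≤ ∑ sL ∈ F, (ENNReal.ofReal (Real.exp ε) * P sL + ENNReal.ofReal δ) :=
          Finset.sum_le_sum hQP
      _ = _ := by
          rw [Finset.sum_add_distrib, ← Finset.mul_sum, Finset.sum_const, nsmul_eq_mul]
  -- finiteness
  have hPle : ∀ sL, P sL ≤ 1 := by
    intro sL
    simp only [hPdef]
    rw [PMF.toOuterMeasure_apply]
    calc ∑' p, (Prod.snd ⁻¹' Z sL).indicator (A (histo m n S sL)) p
        ≤ ∑' p, A (histo m n S sL) p :=
          ENNReal.tsum_le_tsum fun p => Set.indicator_le_self _ _ p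
      _ = 1 := (A (histo m n S sL)).tsum_coe
  have hsumP_le : (∑ sL ∈ F, P sL) ≤ (F.card : ℝ≥0∞) := by
    calc ∑ sL ∈ F, P sL ≤ ∑ sL ∈ F, 1 := Finset.sum_le_sum fun sL _ => hPle sL
      _ = (F.card : ℝ≥0∞) := by simp
  have hsumP_ne : (∑ sL ∈ F, P sL) ≠ ⊤ :=
    ne_top_of_le_ne_top (ENNReal.natCast_ne_top _) hsumP_le
  -- trivial case
  by_cases hT : Real.exp (-ε) * (1 - β - δ - Real.exp (-1)) *
      ((m : ℝ) / 2 - (m : ℝ) / (2 * k)) ≤ 0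
  · rw [ENNReal.ofReal_eq_zero.2 hT]
    exact zero_le
  push_neg at hT
  have hNr : (0 : ℝ) ≤ (m : ℝ) / 2 - (m : ℝ) / (2 * k) := by
    rw [← hNcast]; positivity
  have hT2 : 0 < 1 - β - δ - Real.exp (-1) := by
    by_contra h
    push_neg at h
    nlinarith [Real.exp_pos (-ε), mul_nonneg (neg_nonneg.mpr h) hNr]
  have hβ1 : β ≤ 1 := by
    have := Real.exp_pos (-1)
    linarith
  -- to the reals
  set sR : ℝ := (∑ sL ∈ F, P sL).toReal with hsRdef
  have hsR0 : 0 ≤ sR := ENNReal.toReal_nonneg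
  have hchain := le_trans hcount hsumQ
  have hreal : (G : ℝ) * (1 - β) ≤ Real.exp ε * sR + (F.card : ℝ) * δ := by
    have hfin : ENNReal.ofReal (Real.exp ε) * (∑ sL ∈ F, P sL)
        + (F.card : ℝ≥0∞) * ENNReal.ofReal δ ≠ ⊤ :=
      ENNReal.add_ne_top.2
        ⟨ENNReal.mul_ne_top ENNReal.ofReal_ne_top hsumP_ne,
         ENNReal.mul_ne_top (ENNReal.natCast_ne_top _) ENNReal.ofReal_ne_top⟩
    have h := ENNReal.toReal_mono hfin hchain
    rw [ENNReal.toReal_mul, ENNReal.toReal_natCast,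
      ENNReal.toReal_ofReal (by linarith : (0:ℝ) ≤ 1 - β),
      ENNReal.toReal_add (ENNReal.mul_ne_top ENNReal.ofReal_ne_top hsumP_ne)
        (ENNReal.mul_ne_top (ENNReal.natCast_ne_top _) ENNReal.ofReal_ne_top),
      ENNReal.toReal_mul, ENNReal.toReal_mul, ENNReal.toReal_ofReal (Real.exp_nonneg _),
      ENNReal.toReal_ofReal hδ, ENNReal.toReal_natCast] at h
    exact h
  -- numeric bound
  have hC' : ((S.card - k).choose r : ℝ) ≤ Real.exp (-1) * (S.card.choose r : ℝ) :=
    choose_le_exp S.card k r hk hkM hkr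
  have hCle : (S.card - k).choose r ≤ S.card.choose r :=
    Nat.choose_le_choose r (Nat.sub_le _ _)
  have hGcast : (G : ℝ) = (S.card.choose r : ℝ) - ((S.card - k).choose r : ℝ) := by
    rw [hGdef, Nat.cast_sub hCle]
  have hFr : (F.card : ℝ) = (S.card.choose r : ℝ) := by exact_mod_cast hFcard
  have hkey : Real.exp (-ε) * (1 - β - δ - Real.exp (-1)) * (F.card : ℝ) ≤ sR := by
    have hexpinv : Real.exp (-ε) * Real.exp ε = 1 := by
      rw [← Real.exp_add]; simp
    have hc0 : (0 : ℝ) ≤ ((S.card - k).choose r : ℝ) := Nat.cast_nonneg _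
    have h4 : (F.card : ℝ) * (1 - β - δ - Real.exp (-1)) ≤ Real.exp ε * sR := by
      nlinarith [mul_nonneg hc0 hβ]
    have h5 := mul_le_mul_of_nonneg_left h4 (Real.exp_pos (-ε)).le
    calc Real.exp (-ε) * (1 - β - δ - Real.exp (-1)) * (F.card : ℝ)
        = Real.exp (-ε) * ((F.card : ℝ) * (1 - β - δ - Real.exp (-1))) := by ring
      _ ≤ Real.exp (-ε) * (Real.exp ε * sR) := h5
      _ = sR := by rw [← mul_assoc, hexpinv, one_mul]
  -- final assembly
  rw [ENNReal.le_div_iff_mul_le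
    (Or.inl (by exact_mod_cast hFpos.ne' : (F.card : ℝ≥0∞) ≠ 0))
    (Or.inl (ENNReal.natCast_ne_top _))]
  have hx : 0 ≤ Real.exp (-ε) * (1 - β - δ - Real.exp (-1)) :=
    mul_nonneg (Real.exp_nonneg _) hT2.le
  have lhs_eq : ENNReal.ofReal (Real.exp (-ε) * (1 - β - δ - Real.exp (-1)) *
        ((m : ℝ) / 2 - (m : ℝ) / (2 * k))) * (F.card : ℝ≥0∞)
      = (N : ℝ≥0∞) * ENNReal.ofReal (Real.exp (-ε) * (1 - β - δ - Real.exp (-1))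
          * (F.card : ℝ)) := by
    rw [← hNcast, ← ENNReal.ofReal_natCast N, ← ENNReal.ofReal_natCast F.card,
      ← ENNReal.ofReal_mul (mul_nonneg hx (Nat.cast_nonneg N)),
      ← ENNReal.ofReal_mul (Nat.cast_nonneg N)]
    congr 1
    ring
  calc ENNReal.ofReal (Real.exp (-ε) * (1 - β - δ - Real.exp (-1)) *
        ((m : ℝ) / 2 - (m : ℝ) / (2 * k))) * (F.card : ℝ≥0∞)
      = (N : ℝ≥0∞) * ENNReal.ofReal (Real.exp (-ε) * (1 - β - δ - Real.exp (-1))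
          * (F.card : ℝ)) := lhs_eq
    _ ≤ (N : ℝ≥0∞) * ENNReal.ofReal sR :=
        mul_le_mul_right (ENNReal.ofReal_le_ofReal hkey) _
    _ = (N : ℝ≥0∞) * (∑ sL ∈ F, P sL) := by
        rw [hsRdef, ENNReal.ofReal_toReal hsumP_ne]
    _ = ∑ sL ∈ F, (N : ℝ≥0∞) * P sL := Finset.mul_sum _ _ _
    _ ≤ _ := Finset.sum_le_sum hstep1
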